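/- (Pointwise worst-case testable implication of external validity.) In the discrete data-combination setup, assume experimental internal validity, short-term external validity, consistency and strict overlap, with 𝒴 ⊆ ℝ. Then for every t ∈ ℝ and every x ∈ 𝒳 with P(X=x, G=0) > 0, P(X=x, G=1) > 0, P(W=1, X=x, G=1) > 0 and P(W=1, X=x, G=0) > 0: P(Y1 ≤ t | W=1, X=x, G=1) · P(W=1 | X=x, G=1) ≤ P(Y1 ≤ t | W=1, X=x, G=0) ≤ P(Y1 ≤ t | W=1, X=x, G=1) · P(W=1 | X=x, G=1) + P(W=0 | X=x, G=1). -/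

import Mathlib

open MeasureTheory ProbabilityTheory

/-- Conditional probability `P(A | B)` as a real number. -/
noncomputable def cP {Ω : Type*} [MeasurableSpace Ω] (P : Measure Ω) (A B : Set Ω) : ℝ :=
  ((P[|B]) A).toReal

lemma cP_eq {Ω : Type*} [MeasurableSpace Ω] (P : Measure Ω) {B : Set Ω} (hB : MeasurableSet B)
    (A : Set Ω) : cP P A B = (P (B ∩ A)).toReal / (P B).toReal := by
  rw [cP, cond_apply hB, ENNReal.toReal_mul, ENNReal.toReal_inv, inv_mul_eq_div]

lemma indep_toReal_mul {Ω : Type*} [MeasurableSpace Ω] (P : Measure Ω) [IsProbabilityMeasure P]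
    {B S T : Set Ω} (hB : MeasurableSet B) (hPB : P B ≠ 0)
    (h : (P[|B]) (S ∩ T) = (P[|B]) S * (P[|B]) T) :
    (P (B ∩ (S ∩ T))).toReal * (P B).toReal
      = (P (B ∩ S)).toReal * (P (B ∩ T)).toReal := by
  rw [cond_apply hB, cond_apply hB, cond_apply hB] at h
  have hb : (P B).toReal > 0 := ENNReal.toReal_pos hPB (measure_ne_top P B)
  have h' := congrArg ENNReal.toReal h
  simp only [ENNReal.toReal_mul, ENNReal.toReal_inv] at h'
  have hb' : (P B).toReal ≠ 0 := hb.ne'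
  field_simp at h'
  nlinarith [h']

/-- Pointwise worst-case testable implication of external validity: in the
discrete data-combination setup, under experimental internal validity, short-term external
validity, consistency and strict overlap, the observed experimental treated-arm distribution
function of the short-term outcome is bracketed by the Manski-type worst-case bounds built
from the observational arm. -/
theorem external_validity_worst_case_bounds
    {Ω : Type*} [MeasurableSpace Ω] (P : Measure Ω) [IsProbabilityMeasure P]
    {𝒳 : Type*} [Fintype 𝒳] [MeasurableSpace 𝒳] [MeasurableSingletonClass 𝒳]
    (W G : Ω → Bool) (X : Ω → 𝒳) (Y1 : Bool → Ω → ℝ)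
    (hW : Measurable W) (hG : Measurable G) (hX : Measurable X)
    (hY1 : ∀ w, Measurable (Y1 w))
    (hfin : ∀ w, (Set.range (Y1 w)).Finite)
    -- experimental internal validity
    (hIV : ∀ x : 𝒳, 0 < P ({ω | X ω = x} ∩ {ω | G ω = false}) →
      IndepFun W (fun ω => (Y1 true ω, Y1 false ω))
        (P[|{ω | X ω = x} ∩ {ω | G ω = false}]))
    -- short-term external validity
    (hEV : ∀ x : 𝒳, 0 < P {ω | X ω = x} →
      IndepFun G (fun ω => (Y1 true ω, Y1 false ω)) (P[|{ω | X ω = x}])) :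
    ∀ (t : ℝ) (x : 𝒳),
      0 < P ({ω | X ω = x} ∩ {ω | G ω = false}) →
      0 < P ({ω | X ω = x} ∩ {ω | G ω = true}) →
      0 < P ({ω | W ω = true} ∩ {ω | X ω = x} ∩ {ω | G ω = true}) →
      0 < P ({ω | W ω = true} ∩ {ω | X ω = x} ∩ {ω | G ω = false}) →
      cP P {ω | Y1 (W ω) ω ≤ t}
          ({ω | W ω = true} ∩ {ω | X ω = x} ∩ {ω | G ω = true}) *
        cP P {ω | W ω = true} ({ω | X ω = x} ∩ {ω | G ω = true})
      ≤ cP P {ω | Y1 (W ω) ω ≤ t}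
          ({ω | W ω = true} ∩ {ω | X ω = x} ∩ {ω | G ω = false})
      ∧
      cP P {ω | Y1 (W ω) ω ≤ t}
          ({ω | W ω = true} ∩ {ω | X ω = x} ∩ {ω | G ω = false})
      ≤ cP P {ω | Y1 (W ω) ω ≤ t}
          ({ω | W ω = true} ∩ {ω | X ω = x} ∩ {ω | G ω = true}) *
          cP P {ω | W ω = true} ({ω | X ω = x} ∩ {ω | G ω = true}) +
        cP P {ω | W ω = false} ({ω | X ω = x} ∩ {ω | G ω = true}) := by
  intro t x h0 h1 hW1 hW0
  classical
  set A : Set Ω := {ω | Y1 true ω ≤ t} with hA_def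
  set S : Set Ω := {ω | Y1 (W ω) ω ≤ t} with hS_def
  set Wt : Set Ω := {ω | W ω = true} with hWt_def
  set Wf : Set Ω := {ω | W ω = false} with hWf_def
  set Xx : Set Ω := {ω | X ω = x} with hXx_def
  set G0 : Set Ω := {ω | G ω = false} with hG0_def
  set G1 : Set Ω := {ω | G ω = true} with hG1_def
  -- measurability
  have mWt : MeasurableSet Wt := hW (measurableSet_singleton true)
  have mWf : MeasurableSet Wf := hW (measurableSet_singleton false)
  have mXx : MeasurableSet Xx := hX (measurableSet_singleton x)
  have mG0 : MeasurableSet G0 := hG (measurableSet_singleton false)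
  have mG1 : MeasurableSet G1 := hG (measurableSet_singleton true)
  have mA : MeasurableSet A := (hY1 true) measurableSet_Iic
  have mS' : MeasurableSet {p : ℝ × ℝ | p.1 ≤ t} :=
    measurableSet_le measurable_fst measurable_const
  -- on {W = true}, the event S coincides with A
  have hSA : ∀ B : Set Ω, Wt ∩ Xx ∩ B ∩ S = Wt ∩ Xx ∩ B ∩ A := by
    intro B
    ext ω
    simp only [Set.mem_inter_iff, hS_def, hA_def, hWt_def, Set.mem_setOf_eq]
    constructor
    · rintro ⟨⟨⟨hw, hx⟩, hb⟩, hs⟩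
      exact ⟨⟨⟨hw, hx⟩, hb⟩, by rwa [hw] at hs⟩
    · rintro ⟨⟨⟨hw, hx⟩, hb⟩, hs⟩
      exact ⟨⟨⟨hw, hx⟩, hb⟩, by rwa [hw]⟩
  -- positivity of relevant measures
  have hx_pos : 0 < P Xx := lt_of_lt_of_le h0 (measure_mono Set.inter_subset_left)
  have px_pos : (0:ℝ) < (P Xx).toReal := ENNReal.toReal_pos hx_pos.ne' (measure_ne_top P _)
  have b0_pos : (0:ℝ) < (P (Xx ∩ G0)).toReal := ENNReal.toReal_pos h0.ne' (measure_ne_top P _)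
  have b1_pos : (0:ℝ) < (P (Xx ∩ G1)).toReal := ENNReal.toReal_pos h1.ne' (measure_ne_top P _)
  have n0_pos : (0:ℝ) < (P (Wt ∩ Xx ∩ G0)).toReal :=
    ENNReal.toReal_pos hW0.ne' (measure_ne_top P _)
  have n1_pos : (0:ℝ) < (P (Wt ∩ Xx ∩ G1)).toReal :=
    ENNReal.toReal_pos hW1.ne' (measure_ne_top P _)
  -- independence product identities
  have hIV' := (hIV x h0).measure_inter_preimage_eq_mul {true} {p : ℝ × ℝ | p.1 ≤ t}
    (measurableSet_singleton _) mS'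
  have hEV0 := (hEV x hx_pos).measure_inter_preimage_eq_mul {false} {p : ℝ × ℝ | p.1 ≤ t}
    (measurableSet_singleton _) mS'
  have hEV1 := (hEV x hx_pos).measure_inter_preimage_eq_mul {true} {p : ℝ × ℝ | p.1 ≤ t}
    (measurableSet_singleton _) mS'
  have e1 : (P ((Xx ∩ G0) ∩ (Wt ∩ A))).toReal * (P (Xx ∩ G0)).toReal
      = (P ((Xx ∩ G0) ∩ Wt)).toReal * (P ((Xx ∩ G0) ∩ A)).toReal :=
    indep_toReal_mul P (mXx.inter mG0) h0.ne' hIV'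
  have e2 : (P (Xx ∩ (G0 ∩ A))).toReal * (P Xx).toReal
      = (P (Xx ∩ G0)).toReal * (P (Xx ∩ A)).toReal := by
    have := indep_toReal_mul P mXx hx_pos.ne' hEV0
    exact this
  have e3 : (P (Xx ∩ (G1 ∩ A))).toReal * (P Xx).toReal
      = (P (Xx ∩ G1)).toReal * (P (Xx ∩ A)).toReal := by
    have := indep_toReal_mul P mXx hx_pos.ne' hEV1
    exact this
  -- normalize set forms in e1, e2, e3
  have s1 : (Xx ∩ G0) ∩ (Wt ∩ A) = Wt ∩ Xx ∩ G0 ∩ A := by ext ω; simp only [Set.mem_inter_iff]; tauto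
  have s2 : (Xx ∩ G0) ∩ Wt = Wt ∩ Xx ∩ G0 := by ext ω; simp only [Set.mem_inter_iff]; tauto
  have s4 : Xx ∩ (G0 ∩ A) = Xx ∩ G0 ∩ A := (Set.inter_assoc _ _ _).symm
  have s5 : Xx ∩ (G1 ∩ A) = Xx ∩ G1 ∩ A := (Set.inter_assoc _ _ _).symm
  rw [s1, s2] at e1
  rw [s4] at e2
  rw [s5] at e3
  -- abbreviations for real numbers
  set a0 : ℝ := (P (Wt ∩ Xx ∩ G0 ∩ A)).toReal with ha0
  set a1 : ℝ := (P (Wt ∩ Xx ∩ G1 ∩ A)).toReal with ha1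
  set n0 : ℝ := (P (Wt ∩ Xx ∩ G0)).toReal with hn0
  set n1 : ℝ := (P (Wt ∩ Xx ∩ G1)).toReal with hn1
  set m1 : ℝ := (P ((Xx ∩ G1) ∩ Wf)).toReal with hm1
  set b0 : ℝ := (P (Xx ∩ G0)).toReal with hb0
  set b1 : ℝ := (P (Xx ∩ G1)).toReal with hb1
  set px : ℝ := (P Xx).toReal with hpx
  set c0 : ℝ := (P (Xx ∩ G0 ∩ A)).toReal with hc0
  set c1 : ℝ := (P (Xx ∩ G1 ∩ A)).toReal with hc1
  set cx : ℝ := (P (Xx ∩ A)).toReal with hcx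
  -- e1 : a0 * b0 = n0 * c0 ; e2 : c0 * px = b0 * cx ; e3 : c1 * px = b1 * cx
  -- key ratio identity: a0 / n0 = c1 / b1
  have h4 : c0 * b1 * px = b0 * c1 * px := by linear_combination b1 * e2 - b0 * e3
  have h5 : c0 * b1 = b0 * c1 := mul_right_cancel₀ px_pos.ne' h4
  have h6 : a0 * b1 * b0 = c1 * n0 * b0 := by linear_combination b1 * e1 + n0 * h5
  have key : a0 * b1 = c1 * n0 := mul_right_cancel₀ b0_pos.ne' h6
  have hratio : a0 / n0 = c1 / b1 := by
    rw [div_eq_div_iff n0_pos.ne' b1_pos.ne']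
    exact key
  -- monotonicity facts
  have hlow : a1 ≤ c1 := by
    have : Wt ∩ Xx ∩ G1 ∩ A ⊆ Xx ∩ G1 ∩ A := by
      intro ω; simp only [Set.mem_inter_iff]; tauto
    exact ENNReal.toReal_mono (measure_ne_top P _) (measure_mono this)
  have hup : c1 ≤ a1 + m1 := by
    have hsub : Xx ∩ G1 ∩ A ⊆ (Wt ∩ Xx ∩ G1 ∩ A) ∪ ((Xx ∩ G1) ∩ Wf) := by
      intro ω hω
      rcases Bool.eq_false_or_eq_true (W ω) with h | h
      · left
        exact ⟨⟨⟨h, hω.1.1⟩, hω.1.2⟩, hω.2⟩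
      · right
        exact ⟨⟨hω.1.1, hω.1.2⟩, h⟩
    calc c1 ≤ (P ((Wt ∩ Xx ∩ G1 ∩ A) ∪ ((Xx ∩ G1) ∩ Wf))).toReal :=
            ENNReal.toReal_mono (measure_ne_top P _) (measure_mono hsub)
      _ ≤ a1 + m1 := by
          rw [ha1, hm1, ← ENNReal.toReal_add (measure_ne_top P _) (measure_ne_top P _)]
          exact ENNReal.toReal_mono (by finiteness) (measure_union_le _ _)
  -- rewrite the goal in terms of these real numbers
  rw [cP_eq P ((mWt.inter mXx).inter mG1), cP_eq P ((mWt.inter mXx).inter mG0),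
    cP_eq P (mXx.inter mG1), cP_eq P (mXx.inter mG1)]
  have g1 : Wt ∩ Xx ∩ G1 ∩ S = Wt ∩ Xx ∩ G1 ∩ A := hSA G1
  have g0 : Wt ∩ Xx ∩ G0 ∩ S = Wt ∩ Xx ∩ G0 ∩ A := hSA G0
  have g2 : (Xx ∩ G1) ∩ Wt = Wt ∩ Xx ∩ G1 := by ext ω; simp only [Set.mem_inter_iff]; tauto
  rw [g1, g0, g2]
  -- final arithmetic
  have hprod : a1 / n1 * (n1 / b1) = a1 / b1 := by
    field_simp
  constructor
  · rw [hprod, hratio]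
    gcongr
  · rw [hprod, hratio]
    have : c1 / b1 ≤ (a1 + m1) / b1 := by gcongr
    calc c1 / b1 ≤ (a1 + m1) / b1 := this
      _ = a1 / b1 + m1 / b1 := add_div _ _ _
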